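/- Let Ω ⊂ ℝ be open, u: Ω → ℝ locally Lipschitz, x₀ ∈ Ω, and suppose |∇⁻u|(x₀) ≤ f(x₀) where f ≥ 0. If ξ: ℝ → Ω is 1-Lipschitz with ξ(0) = x₀ and φ ∈ C¹(ℝ) is such that t ↦ u(ξ(t)) − φ(t) attains a local maximum at t = 0, then |φ'(0)| ≤ f(x₀). -/

import Mathlib

open Filter Topology Set

/-- Sub-slope `|∇⁻u|(x) = limsup_{y→x} max{u(x)−u(y),0}/|x−y|`. -/
noncomputable def subSlope (u : ℝ → ℝ) (x : ℝ) : ℝ :=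
  Filter.limsup (fun y => max (u x - u y) 0 / dist x y) (𝓝[≠] x)

/-- a Monge subsolution is a curve-based subsolution along any
single admissible curve: if `|∇⁻u|(x₀) ≤ f(x₀)`, `ξ` is a 1-Lipschitz curve in
`Ω` with `ξ(0) = x₀`, and `φ ∈ C¹(ℝ)` is such that `t ↦ u(ξ(t)) − φ(t)` has a
local maximum at `t = 0`, then `|φ'(0)| ≤ f(x₀)`. -/
theorem monge_subsolution_is_c_subsolution
    (Ω : Set ℝ) (hΩ : IsOpen Ω) (u f : ℝ → ℝ) (hf0 : ∀ x, 0 ≤ f x)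
    (huLip : ∀ x ∈ Ω, ∃ ε > (0 : ℝ), ∃ K : NNReal,
      LipschitzOnWith K u (Metric.ball x ε ∩ Ω))
    (x₀ : ℝ) (hx₀ : x₀ ∈ Ω) (hmonge : subSlope u x₀ ≤ f x₀)
    (ξ : ℝ → ℝ) (hξ : LipschitzWith 1 ξ) (hξΩ : ∀ t : ℝ, ξ t ∈ Ω)
    (hξ0 : ξ 0 = x₀)
    (φ : ℝ → ℝ) (hφ : ContDiff ℝ 1 φ)
    (hmax : IsLocalMax (fun t => u (ξ t) - φ t) 0) :
    |deriv φ 0| ≤ f x₀ := by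
  have hd : HasDerivAt φ (deriv φ 0) 0 :=
    ((hφ.differentiable one_ne_zero) 0).hasDerivAt
  have key : ∀ ε > (0 : ℝ), |deriv φ 0| ≤ f x₀ + ε := by
    intro ε hε
    set C : ℝ := f x₀ + ε with hCdef
    have hC : 0 < C := add_pos_of_nonneg_of_pos (hf0 x₀) hε
    -- the quotient function
    set g : ℝ → ℝ := fun y => max (u x₀ - u y) 0 / dist x₀ y with hgdef
    -- boundedness of g near x₀ from local Lipschitzness
    obtain ⟨ε₀, hε₀, K, hK⟩ := huLip x₀ hx₀
    have hSnhds : Metric.ball x₀ ε₀ ∩ Ω ∈ 𝓝 x₀ :=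
      Filter.inter_mem (Metric.ball_mem_nhds x₀ hε₀) (hΩ.mem_nhds hx₀)
    have hx₀mem : x₀ ∈ Metric.ball x₀ ε₀ ∩ Ω :=
      ⟨Metric.mem_ball_self hε₀, hx₀⟩
    have hbdd : Filter.IsBoundedUnder (· ≤ ·) (𝓝[≠] x₀) g := by
      refine ⟨(K : ℝ), ?_⟩
      rw [Filter.eventually_map]
      filter_upwards [nhdsWithin_le_nhds hSnhds, self_mem_nhdsWithin] with y hy hy'
      have hyne : y ≠ x₀ := hy'
      have hdpos : 0 < dist x₀ y := by
        rw [dist_pos]; exact fun h => hyne h.symm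
      have h1 : u x₀ - u y ≤ (K : ℝ) * dist x₀ y := by
        have := hK.dist_le_mul x₀ hx₀mem y hy
        calc u x₀ - u y ≤ |u x₀ - u y| := le_abs_self _
          _ = dist (u x₀) (u y) := (Real.dist_eq _ _).symm
          _ ≤ (K : ℝ) * dist x₀ y := this
      have h2 : max (u x₀ - u y) 0 ≤ (K : ℝ) * dist x₀ y :=
        max_le h1 (by positivity)
      exact div_le_of_le_mul₀ hdpos.le (by positivity) (by linarith [h2])
    have hlt : subSlope u x₀ < C := lt_of_le_of_lt hmonge (by simp [hCdef, hε])
    have hev : ∀ᶠ y in 𝓝[≠] x₀, g y < C :=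
      Filter.eventually_lt_of_limsup_lt hlt hbdd
    have hS : ∀ᶠ y in 𝓝 x₀, y ≠ x₀ → g y < C := by
      rw [eventually_nhdsWithin_iff] at hev
      filter_upwards [hev] with y hy hyne
      exact hy hyne
    have hcont : Filter.Tendsto ξ (𝓝 0) (𝓝 x₀) := by
      have := hξ.continuous.continuousAt (x := (0 : ℝ))
      rwa [ContinuousAt, hξ0] at this
    have hev2 : ∀ᶠ t in 𝓝 0, (ξ t ≠ x₀ → g (ξ t) < C) := hcont.eventually hS
    -- main pointwise estimate
    have hmain : ∀ᶠ t in 𝓝 0, φ 0 - φ t ≤ C * |t| := by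
      filter_upwards [hev2, hmax] with t h1 h2
      have hmax' : u (ξ t) - φ t ≤ u x₀ - φ 0 := by
        simpa [hξ0] using h2
      have hdist : dist x₀ (ξ t) ≤ |t| := by
        rw [dist_comm]
        calc dist (ξ t) x₀ = dist (ξ t) (ξ 0) := by rw [hξ0]
          _ ≤ 1 * dist t 0 := hξ.dist_le_mul t 0
          _ = |t| := by simp [Real.dist_eq]
      have hu : u x₀ - u (ξ t) ≤ C * |t| := by
        by_cases hne : ξ t = x₀
        · rw [hne]; simp; positivity
        · have hg := h1 hne
          have hdpos : 0 < dist x₀ (ξ t) := by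
            rw [dist_pos]; exact fun h => hne h.symm
          have : max (u x₀ - u (ξ t)) 0 < C * dist x₀ (ξ t) := by
            rwa [div_lt_iff₀ hdpos] at hg
          calc u x₀ - u (ξ t) ≤ max (u x₀ - u (ξ t)) 0 := le_max_left _ _
            _ ≤ C * dist x₀ (ξ t) := this.le
            _ ≤ C * |t| := by nlinarith
      linarith
    -- turn into bounds on the derivative via slopes
    have hslope : Filter.Tendsto (slope φ 0) (𝓝[≠] 0) (𝓝 (deriv φ 0)) :=
      hasDerivAt_iff_tendsto_slope.1 hd
    have hlow : -C ≤ deriv φ 0 := by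
      have h1 : Filter.Tendsto (slope φ 0) (𝓝[>] 0) (𝓝 (deriv φ 0)) :=
        hslope.mono_left (nhdsWithin_mono _ (fun x hx => ne_of_gt hx))
      refine ge_of_tendsto h1 ?_
      filter_upwards [nhdsWithin_le_nhds hmain, self_mem_nhdsWithin] with t ht ht'
      have ht0 : (0 : ℝ) < t := ht'
      rw [slope_def_field]
      rw [le_div_iff₀ (by linarith : (0:ℝ) < t - 0)]
      have : |t| = t := abs_of_pos ht0
      rw [this] at ht
      nlinarith
    have hhigh : deriv φ 0 ≤ C := by
      have h1 : Filter.Tendsto (slope φ 0) (𝓝[<] 0) (𝓝 (deriv φ 0)) :=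
        hslope.mono_left (nhdsWithin_mono _ (fun x hx => ne_of_lt hx))
      refine le_of_tendsto h1 ?_
      filter_upwards [nhdsWithin_le_nhds hmain, self_mem_nhdsWithin] with t ht ht'
      have ht0 : t < (0 : ℝ) := ht'
      rw [slope_def_field]
      rw [div_le_iff_of_neg (by linarith : t - 0 < 0)]
      have : |t| = -t := abs_of_neg ht0
      rw [this] at ht
      nlinarith
    exact abs_le.2 ⟨hlow, hhigh⟩
  by_contra h
  push_neg at h
  have : |deriv φ 0| ≤ f x₀ + (|deriv φ 0| - f x₀) / 2 :=
    key _ (by linarith)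
  linarith
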